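/- Let N = [[I_n, 0, 0],[n₁ᵀ, I_r, 0],[n₂ᵀ, -n₁, I_n]] be a block lower unitriangular matrix with n₁ ∈ M_{n,r}(ℝ), n₂ ∈ M_n(ℝ), and let J = [[0,0,I_n],[0,I_r,0],[I_n,0,0]]. Then N satisfies J N J = (Nᵀ)⁻¹ if and only if n₂ + n₂ᵀ = -n₁ n₁ᵀ. -/

import Mathlib

open Matrix

/-- The block lower unitriangular matrix
`N = [[I,0,0],[n₁ᵀ,I,0],[n₂ᵀ,-n₁,I]]` satisfies `J N J = (Nᵀ)⁻¹`
(with `J = [[0,0,I_n],[0,I_r,0],[I_n,0,0]]`) iff `n₂ + n₂ᵀ = -n₁ n₁ᵀ`. -/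
theorem stmt3 (n r : ℕ)
    (n₁ : Matrix (Fin n) (Fin r) ℝ) (n₂ : Matrix (Fin n) (Fin n) ℝ)
    (J N : Matrix (Fin n ⊕ (Fin r ⊕ Fin n)) (Fin n ⊕ (Fin r ⊕ Fin n)) ℝ)
    (hJ : J = Matrix.fromBlocks 0 (Matrix.fromCols 0 1) (Matrix.fromRows 0 1)
      (Matrix.fromBlocks 1 0 0 0))
    (hN : N = Matrix.fromBlocks 1 0 (Matrix.fromRows n₁ᵀ n₂ᵀ)
      (Matrix.fromBlocks 1 0 (-n₁) 1)) :
    J * N * J = (Nᵀ)⁻¹ ↔ n₂ + n₂ᵀ = -(n₁ * n₁ᵀ) := by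
  have hdet : N.det = 1 := by
    rw [hN, det_fromBlocks_zero₁₂, det_fromBlocks_zero₁₂]
    simp
  have hdetT : Nᵀ.det ≠ 0 := by
    rw [det_transpose, hdet]; norm_num
  have key : Nᵀ * (J * N * J) =
      fromBlocks 1 (fromCols 0 (n₂ᵀ + (n₁ * n₁ᵀ + n₂))) 0 1 := by
    subst hJ hN
    rw [fromBlocks_transpose, transpose_fromRows, fromBlocks_transpose]
    simp only [fromBlocks_multiply, fromCols_mul_fromRows, fromCols_mul_fromBlocks,
      fromBlocks_mul_fromRows, fromRows_mul_fromCols, fromRows_mul, mul_fromCols,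
      Matrix.mul_one, Matrix.one_mul, Matrix.mul_zero, Matrix.zero_mul, add_zero, zero_add,
      transpose_transpose, transpose_zero, transpose_one, transpose_neg, Matrix.mul_assoc]
    simp [fromBlocks_multiply, fromCols_mul_fromRows, fromCols_mul_fromBlocks,
      fromBlocks_mul_fromRows, fromRows_mul_fromCols, fromRows_mul, mul_fromCols,
      Matrix.mul_add, Matrix.add_mul, Matrix.mul_assoc]
    constructor
    · ext i j
      rcases j with j | j <;>
        simp [Matrix.add_apply, Matrix.neg_apply] <;> ring
    · ext i j
      rcases i with i | i <;> rcases j with j | j <;>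
        simp [Matrix.add_apply, Matrix.neg_apply, Matrix.one_apply]
  have hiff : J * N * J = (Nᵀ)⁻¹ ↔ Nᵀ * (J * N * J) = 1 := by
    constructor
    · intro h; rw [h, mul_nonsing_inv _ (isUnit_iff_ne_zero.mpr hdetT)]
    · intro h; exact (inv_eq_right_inv h).symm
  rw [hiff, key]
  rw [← fromBlocks_one (l := Fin n) (m := Fin r ⊕ Fin n) (α := ℝ)]
  rw [fromBlocks_inj]
  constructor
  · rintro ⟨-, h, -, -⟩
    have h' := ((fromCols_ext_iff _ _ _ _).mp (h.trans fromCols_zero.symm)).2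
    have h2 : n₂ + n₂ᵀ + n₁ * n₁ᵀ = 0 := by rw [← h']; abel
    exact eq_neg_of_add_eq_zero_left h2
  · intro h
    refine ⟨rfl, ?_, rfl, rfl⟩
    rw [← fromCols_zero, fromCols_ext_iff]
    refine ⟨rfl, ?_⟩
    have : n₂ᵀ + (n₁ * n₁ᵀ + n₂) = n₂ + n₂ᵀ + n₁ * n₁ᵀ := by abel
    rw [this, h]
    abel
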